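/- Let M ≥ 1 be a real number (M = M^*, the number of antennas), b ≥ 1 real, and n ≥ 1 an integer. Define real numbers d_{n+1}, d_n, …, d_1 recursively by d_{n+1} = 1 and d_i = M·((b−1)/n + d_{i+1})/(M + (b−1)/n) for i = n, n−1, …, 1 (the staircase recursion of n lines of common slope (b−1)/n against the line y = M(1 − x), started at height 1). Then d_1 = M − (M − 1)·(1 + (b−1)/(n·M))^{−n}. -/

import Mathlib

/-- Closed form for the HLS staircase recursion: `n` lines of common slope
`(b-1)/n` climbing the DMT line `y = M(1 - x)` starting from height
`d_{n+1} = 1` (the analog layer's diversity offset) yield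
`d_1 = M - (M-1)(1 + (b-1)/(nM))^{-n}`. -/
theorem stmt_6 (M b : ℝ) (hM : 1 ≤ M) (hb : 1 ≤ b) (n : ℕ) (hn : 1 ≤ n)
    (d : ℕ → ℝ) (hend : d (n + 1) = 1)
    (hrec : ∀ i, 1 ≤ i → i ≤ n →
      d i = M * ((b - 1) / n + d (i + 1)) / (M + (b - 1) / n)) :
    d 1 = M - (M - 1) * ((1 + (b - 1) / (n * M)) ^ n)⁻¹ := by
  have hM0 : (0:ℝ) < M := lt_of_lt_of_le one_pos hM
  have hn0 : (0:ℝ) < (n:ℝ) := by exact_mod_cast hn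
  set c : ℝ := (b - 1) / n with hc_def
  have hc : 0 ≤ c := div_nonneg (by linarith) hn0.le
  have hMc : 0 < M + c := by linarith
  set q : ℝ := (1 + (b - 1) / (n * M))⁻¹ with hq_def
  have hq : q = M / (M + c) := by
    rw [hq_def, hc_def]
    field_simp
  have key : ∀ k, k ≤ n → d (n + 1 - k) = M + q ^ k * (1 - M) := by
    intro k
    induction k with
    | zero => intro _; simp [hend]
    | succ k ih =>
      intro hkn
      have hk : k ≤ n := Nat.le_of_succ_le hkn
      have h1 : 1 ≤ n - k := Nat.le_sub_of_add_le (by omega)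
      have h2 : n - k ≤ n := Nat.sub_le n k
      have h3 : n + 1 - (k + 1) = n - k := by omega
      have h4 : n - k + 1 = n + 1 - k := by omega
      rw [h3, hrec (n - k) h1 h2, h4, ih hk]
      have : M * (c + (M + q ^ k * (1 - M))) / (M + c)
          = M * (c + M) / (M + c) + (M / (M + c)) * (q ^ k * (1 - M)) := by
        field_simp
        ring
      rw [this, ← hq]
      have h5 : M * (c + M) / (M + c) = M := by
        rw [add_comm c M, mul_div_assoc, div_self hMc.ne', mul_one]
      rw [h5, pow_succ]; ring
  have h1 : n + 1 - n = 1 := by omega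
  have := key n le_rfl
  rw [h1] at this
  rw [this, hq_def, ← inv_pow]
  ring
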